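/- Let s ≥ 1, let T = {α ∈ ℝ^p : ‖α‖₀ ≤ s}, and let α ∈ T satisfy ‖α‖₀ = s. Then a vector v ∈ ℝ^p is a feasible direction of T at α if and only if supp(v) ⊆ supp(α). Consequently, the span of the feasible directions of T at α equals the coordinate subspace {u ∈ ℝ^p : supp(u) ⊆ supp(α)}. -/

import Mathlib

/-- `v` is a feasible direction of the set `T = {α : ‖α‖₀ ≤ s}` at `α`: there is `δ₀ > 0`
such that `α + δ v ∈ T` for all `|δ| < δ₀`. -/
def IsFeasibleDirection {p : ℕ} (s : ℕ) (α v : Fin p → ℝ) : Prop :=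
  ∃ δ₀ : ℝ, 0 < δ₀ ∧ ∀ δ : ℝ, |δ| < δ₀ → (Function.support (α + δ • v)).ncard ≤ s

/-- At a point `α` of maximal support (`‖α‖₀ = s`), a vector `v` is a
feasible direction of `T = {α : ‖α‖₀ ≤ s}` iff `supp v ⊆ supp α`; consequently the span
of the feasible directions is the coordinate subspace `{u : supp u ⊆ supp α}`. -/
theorem feasible_directions_maximal_support
    {p s : ℕ} (hs : 1 ≤ s)
    (α : Fin p → ℝ) (hα : (Function.support α).ncard = s) :
    (∀ v : Fin p → ℝ,
      IsFeasibleDirection s α v ↔ Function.support v ⊆ Function.support α) ∧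
    (Submodule.span ℝ {v : Fin p → ℝ | IsFeasibleDirection s α v} : Set (Fin p → ℝ)) =
      {u : Fin p → ℝ | Function.support u ⊆ Function.support α} := by
  have hfin : ∀ f : Fin p → ℝ, (Function.support f).Finite := fun f => Set.toFinite _
  have key : ∀ v : Fin p → ℝ,
      IsFeasibleDirection s α v ↔ Function.support v ⊆ Function.support α := by
    intro v
    constructor
    · rintro ⟨δ₀, hδ₀, h⟩
      by_contra hsub
      obtain ⟨i, hvi, hαi⟩ := Set.not_subset.mp hsub
      have hne : (Function.support α).Nonempty := by
        rw [← Set.ncard_pos (hfin α)] at *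
        omega
      set F := (hfin α).toFinset with hF
      have hFne : F.Nonempty := (Set.Finite.toFinset_nonempty _).mpr hne
      set c := F.inf' hFne (fun j => |α j| / (|v j| + 1)) with hc
      have hcpos : 0 < c := by
        rw [hc, Finset.lt_inf'_iff]
        intro j hj
        have : α j ≠ 0 := by simpa [hF] using hj
        positivity
      set δ := min δ₀ c / 2 with hδ
      have hδpos : 0 < δ := by positivity
      have hδlt : |δ| < δ₀ := by
        rw [abs_of_pos hδpos]
        have : min δ₀ c ≤ δ₀ := min_le_left _ _
        linarith
      have hsupp : insert i (Function.support α) ⊆ Function.support (α + δ • v) := by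
        intro j hj
        rcases Set.mem_insert_iff.mp hj with rfl | hj
        · have hαj : α j = 0 := Function.notMem_support.mp hαi
          have hvj : v j ≠ 0 := hvi
          simp only [Function.mem_support, Pi.add_apply, Pi.smul_apply, smul_eq_mul, hαj,
            zero_add]
          exact mul_ne_zero (ne_of_gt hδpos) hvj
        · have hαj : α j ≠ 0 := hj
          have hjF : j ∈ F := by simpa [hF] using hj
          have hcle : c ≤ |α j| / (|v j| + 1) := Finset.inf'_le _ hjF
          have hbig : |δ * v j| < |α j| := by
            have h1 : |δ * v j| = δ * |v j| := by
              rw [abs_mul, abs_of_pos hδpos]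
            have h2 : δ < c := by
              have : min δ₀ c ≤ c := min_le_right _ _
              rw [hδ]; linarith
            have h3 : δ * |v j| < c * (|v j| + 1) := by
              have hv1 : (0:ℝ) ≤ |v j| := abs_nonneg _
              nlinarith
            have h4 : c * (|v j| + 1) ≤ |α j| := by
              have hv1 : (0:ℝ) < |v j| + 1 := by positivity
              calc c * (|v j| + 1) ≤ (|α j| / (|v j| + 1)) * (|v j| + 1) := by
                    exact mul_le_mul_of_nonneg_right hcle (le_of_lt hv1)
                _ = |α j| := by field_simp
            linarith [h1 ▸ h3]
          simp only [Function.mem_support, Pi.add_apply, Pi.smul_apply, smul_eq_mul]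
          intro h0
          have : δ * v j = -α j := by linarith
          rw [this, abs_neg] at hbig
          exact lt_irrefl _ hbig
      have hcard : s + 1 ≤ (Function.support (α + δ • v)).ncard := by
        have h1 : (insert i (Function.support α)).ncard = s + 1 := by
          rw [Set.ncard_insert_of_notMem hαi (hfin α), hα]
        rw [← h1]
        exact Set.ncard_le_ncard hsupp (hfin _)
      have := h δ hδlt
      omega
    · intro hsub
      refine ⟨1, one_pos, fun δ _ => ?_⟩
      have hss : Function.support (α + δ • v) ⊆ Function.support α := by
        intro j hj
        by_contra hj'
        have hαj : α j = 0 := Function.notMem_support.mp hj'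
        have hvj : v j = 0 := by
          by_contra hv
          exact hj' (hsub hv)
        apply hj
        simp [hαj, hvj]
      calc (Function.support (α + δ • v)).ncard ≤ (Function.support α).ncard :=
            Set.ncard_le_ncard hss (hfin α)
        _ = s := hα
  refine ⟨key, ?_⟩
  let S : Submodule ℝ (Fin p → ℝ) :=
    { carrier := {u | Function.support u ⊆ Function.support α}
      add_mem' := fun hu hw =>
        (Function.support_add _ _).trans (Set.union_subset hu hw)
      zero_mem' := by simp
      smul_mem' := fun c u hu j hj => hu (fun hj0 => hj (by simp [hj0])) }
  have hset : {v | IsFeasibleDirection s α v} = (S : Set _) := Set.ext fun v => key v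
  rw [hset, Submodule.span_eq]
  rfl
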